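/- Let L ⊂ A = ℝ⟨x,y⟩ be the free Lie algebra on x, y (the smallest Lie subalgebra of A under [a,b] = ab − ba containing x and y). Define ∂_x^L : L → A by ∂_x^L(l) = (id ⊗ ε)(∂_x(l)), where ε : A → ℝ picks out the constant term. Then ∂_x^L satisfies the Leibniz-type identity ∂_x^L([l,m]) = l·∂_x^L(m) − m·∂_x^L(l) for all l, m ∈ L. -/

import Mathlib

noncomputable section
open TensorProduct

abbrev A : Type := FreeAlgebra ℝ (Fin 2)
abbrev B : Type := A ⊗[ℝ] A

def X : A := FreeAlgebra.ι ℝ 0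
def Y : A := FreeAlgebra.ι ℝ 1

/-- Generator matrices used to define the noncommutative partial derivative `pd d`. -/
def genMat (d i : Fin 2) : Matrix (Fin 2) (Fin 2) B :=
  !![(Algebra.TensorProduct.includeLeft : A →ₐ[ℝ] B) (FreeAlgebra.ι ℝ i), if i = d then 1 else 0;
     0, Algebra.TensorProduct.includeRight (FreeAlgebra.ι ℝ i)]

def Φmat (d : Fin 2) : A →ₐ[ℝ] Matrix (Fin 2) (Fin 2) B :=
  FreeAlgebra.lift ℝ (genMat d)

/-- The noncommutative partial derivative `∂_x` (for `d = 0`) resp. `∂_y` (for `d = 1`):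
on a monomial it splits the word at each occurrence of the letter `d`. -/
def pd (d : Fin 2) (a : A) : B := Φmat d a 0 1

/-- The counit `ε : A → ℝ`, picking out the constant term (`x, y ↦ 0`). -/
def εR : A →ₐ[ℝ] ℝ := FreeAlgebra.lift ℝ (fun _ => (0 : ℝ))

/-- The Lie partial derivative `∂^L = (id ⊗ ε) ∘ ∂ : A → A`. -/
def pdL (d : Fin 2) (a : A) : A :=
  TensorProduct.rid ℝ A (LinearMap.lTensor A εR.toLinearMap (pd d a))

attribute [local instance 100] LieRing.ofAssociativeRing

/-- The free Lie algebra `L ⊂ A`: the smallest Lie subalgebra of `A` (with bracket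
`[a,b] = ab − ba`) containing `x` and `y`. -/
def L : LieSubalgebra ℝ A := LieSubalgebra.lieSpan ℝ A {X, Y}

-- structure lemma
lemma phi_entries (d : Fin 2) (a : A) :
    Φmat d a 0 0 = (Algebra.TensorProduct.includeLeft : A →ₐ[ℝ] B) a ∧
    Φmat d a 1 0 = 0 ∧
    Φmat d a 1 1 = (Algebra.TensorProduct.includeRight : A →ₐ[ℝ] B) a := by
  induction a using FreeAlgebra.induction with
  | grade0 r =>
      simp [Matrix.algebraMap_matrix_apply]
  | grade1 i =>
      simp [Φmat, genMat]
  | mul a b ha hb =>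
      obtain ⟨ha0, ha1, ha2⟩ := ha
      obtain ⟨hb0, hb1, hb2⟩ := hb
      simp only [map_mul, Matrix.mul_apply, Fin.sum_univ_two, ha0, ha1, ha2, hb0, hb1, hb2]
      simp [mul_comm]
  | add a b ha hb =>
      obtain ⟨ha0, ha1, ha2⟩ := ha
      obtain ⟨hb0, hb1, hb2⟩ := hb
      simp [map_add, Matrix.add_apply, ha0, ha1, ha2, hb0, hb1, hb2]

lemma pd_mul (d : Fin 2) (a b : A) :
    pd d (a * b) = (Algebra.TensorProduct.includeLeft : A →ₐ[ℝ] B) a * pd d b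
      + pd d a * (Algebra.TensorProduct.includeRight : A →ₐ[ℝ] B) b := by
  have ha := phi_entries d a
  have hb := phi_entries d b
  simp only [pd, map_mul, Matrix.mul_apply, Fin.sum_univ_two, ha.1, hb.2.2]

set_option synthInstance.maxHeartbeats 400000 in
def gL : B →ₗ[ℝ] A :=
  (TensorProduct.rid ℝ A).toLinearMap ∘ₗ LinearMap.lTensor A εR.toLinearMap

lemma pdL_def' (d : Fin 2) (a : A) : pdL d a = gL (pd d a) := rfl

def fA : B →ₐ[ℝ] A :=
  Algebra.TensorProduct.lift (AlgHom.id ℝ A) ((Algebra.ofId ℝ A).comp εR)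
    (fun a b => by
      simpa [Algebra.ofId_apply, Commute, SemiconjBy] using (Algebra.commutes (εR b) a).symm)

lemma pdL_eq (d : Fin 2) (a : A) : pdL d a = fA (pd d a) := by
  rw [pdL_def']
  induction pd d a using TensorProduct.induction_on with
  | zero => simp
  | tmul u v =>
      simp [gL, fA, Algebra.TensorProduct.lift_tmul, Algebra.ofId_apply, Algebra.smul_def,
        Algebra.commutes]
  | add s t hs ht => simp [map_add, hs, ht]

lemma fA_incL (a : A) : fA ((Algebra.TensorProduct.includeLeft : A →ₐ[ℝ] B) a) = a := by
  simp [fA]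

lemma fA_incR (b : A) :
    fA ((Algebra.TensorProduct.includeRight : A →ₐ[ℝ] B) b) = algebraMap ℝ A (εR b) := by
  simp [fA, Algebra.ofId_apply]

lemma pdL_mul (d : Fin 2) (a b : A) :
    pdL d (a * b) = a * pdL d b + pdL d a * algebraMap ℝ A (εR b) := by
  rw [pdL_eq, pd_mul, map_add, map_mul, map_mul, fA_incL, fA_incR, ← pdL_eq, ← pdL_eq]

lemma pdL_sub (d : Fin 2) (a b : A) : pdL d (a - b) = pdL d a - pdL d b := by
  have : pd d (a - b) = pd d a - pd d b := by
    simp [pd, map_sub, Matrix.sub_apply]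
  simp [pdL_def', this, map_sub]

lemma eps_L {a : A} (ha : a ∈ L) : εR a = 0 := by
  let K : LieSubalgebra ℝ A :=
    { carrier := {a : A | εR a = 0}
      add_mem' := fun hx hy => by simp_all [Set.mem_setOf_eq, map_add]
      zero_mem' := by simp
      smul_mem' := fun c x hx => by simp_all [Set.mem_setOf_eq]
      lie_mem' := fun hx hy => by
        simp_all [Set.mem_setOf_eq, Ring.lie_def, map_sub, map_mul] }
  have hle : L ≤ K := by
    rw [L, LieSubalgebra.lieSpan_le]
    rintro a (rfl | rfl) <;> simp [X, Y, K, Set.mem_setOf_eq, εR]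
  exact hle ha

/-- Leibniz-type identity for `∂_x^L` on the free Lie algebra:
`∂_x^L([l,m]) = l·∂_x^L(m) − m·∂_x^L(l)`. -/
theorem pdL_leibniz (l m : A) (hl : l ∈ L) (hm : m ∈ L) :
    pdL 0 (l * m - m * l) = l * pdL 0 m - m * pdL 0 l := by
  rw [pdL_sub, pdL_mul, pdL_mul, eps_L hl, eps_L hm]
  simp
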